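/- The sequence spir over {0,1}, defined by spir(n) = 1 if n = k(k+1)/2 for some integer k ≥ 0 and spir(n) = 0 otherwise, is not pure morphic: there is no morphism f : {0,1} → {0,1}⁺ with f(1) = 1·u for some nonempty word u such that spir = f^∞(1). -/
import Mathlib


/-- A morphism `f : Γ → Γ⁺` applied to a finite word, by concatenation. -/
def applyW {Γ : Type*} (f : Γ → List Γ) (w : List Γ) : List Γ := w.flatMap f

/-- A morphism applied to an infinite sequence, by concatenation
(meaningful when every `f a` is nonempty: then the `n`-th letter of
`f(σ(0))f(σ(1))⋯` lies within the first `n+1` blocks). -/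
def applyS {Γ : Type*} (f : Γ → List Γ) (σ : ℕ → Γ) (n : ℕ) : Γ :=
  ((List.range (n + 1)).flatMap fun i => f (σ i)).getD n (σ 0)

/-- A coding applied letterwise to an infinite sequence. -/
def applyC {Γ S : Type*} (τ : Γ → S) (σ : ℕ → Γ) : ℕ → S := fun n => τ (σ n)

/-- The fixed point `f^∞(a)` of a morphism `f` with `f a = a·u`, `u` nonempty:
its `n`-th letter is the `n`-th letter of `f^(n+1)(a)` (which has length `> n`). -/
def fixpt {Γ : Type*} (f : Γ → List Γ) (a : Γ) (n : ℕ) : Γ :=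
  ((applyW f)^[n + 1] [a]).getD n a

lemma applyW_cons {Γ : Type*} (f : Γ → List Γ) (a : Γ) (t : List Γ) :
    applyW f (a :: t) = f a ++ applyW f t := by
  simp [applyW]

lemma applyW_append {Γ : Type*} (f : Γ → List Γ) (w w' : List Γ) :
    applyW f (w ++ w') = applyW f w ++ applyW f w' := by
  simp [applyW]

lemma applyW_prefix {Γ : Type*} (f : Γ → List Γ) {w w' : List Γ} (h : w <+: w') :
    applyW f w <+: applyW f w' := by
  obtain ⟨t, rfl⟩ := h
  rw [applyW_append]
  exact List.prefix_append _ _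

section

variable {f : Fin 2 → List (Fin 2)} {u : List (Fin 2)}

lemma P_succ (f : Fin 2 → List (Fin 2)) (k : ℕ) :
    (applyW f)^[k + 1] [(1 : Fin 2)] = applyW f ((applyW f)^[k] [1]) :=
  Function.iterate_succ_apply' _ _ _

lemma P_prefix_succ (hf1 : f 1 = 1 :: u) (k : ℕ) :
    (applyW f)^[k] [(1 : Fin 2)] <+: (applyW f)^[k + 1] [1] := by
  induction k with
  | zero =>
      rw [P_succ]
      simp only [Function.iterate_zero, id]
      rw [applyW_cons, hf1]
      simp [applyW]
  | succ k ih =>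
      rw [P_succ, P_succ]
      exact applyW_prefix f ih

lemma P_prefix (hf1 : f 1 = 1 :: u) {i j : ℕ} (h : i ≤ j) :
    (applyW f)^[i] [(1 : Fin 2)] <+: (applyW f)^[j] [1] := by
  induction j with
  | zero => simp_all
  | succ j ih =>
      rcases Nat.eq_or_lt_of_le h with rfl | h
      · exact List.prefix_refl _
      · exact (ih (Nat.lt_succ_iff.mp h)).trans (P_prefix_succ hf1 j)

lemma length_applyW_le (hne : ∀ b, f b ≠ []) (w : List (Fin 2)) :
    w.length ≤ (applyW f w).length := by
  induction w with
  | nil => simp [applyW]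
  | cons a t ih =>
      rw [applyW_cons]
      have := List.length_pos_iff.mpr (hne a)
      simp only [List.length_append, List.length_cons]
      omega

lemma length_P (hne : ∀ b, f b ≠ []) (hf1 : f 1 = 1 :: u) (hu : u ≠ []) (k : ℕ) :
    k + 1 ≤ ((applyW f)^[k] [(1 : Fin 2)]).length := by
  induction k with
  | zero => simp
  | succ k ih =>
      obtain ⟨t, ht⟩ := P_prefix hf1 (Nat.zero_le k)
      simp only [Function.iterate_zero, id, List.singleton_append] at ht
      have h3 := length_applyW_le hne t
      have h2 : 2 ≤ (f 1).length := by
        rw [hf1]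
        cases u with
        | nil => exact absurd rfl hu
        | cons a l => simp
      rw [P_succ, ← ht, applyW_cons]
      rw [← ht] at ih
      simp only [List.length_append, List.length_cons] at ih ⊢
      omega

lemma getD_prefix {w w' : List (Fin 2)} (h : w <+: w') {n : ℕ} (hn : n < w.length)
    (d : Fin 2) : w'.getD n d = w.getD n d := by
  obtain ⟨t, rfl⟩ := h
  rw [List.getD_append _ _ _ _ hn]

lemma fixpt_getD (hne : ∀ b, f b ≠ []) (hf1 : f 1 = 1 :: u) (hu : u ≠ []) {n k : ℕ}
    (hk : n < ((applyW f)^[k] [(1 : Fin 2)]).length) :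
    fixpt f 1 n = ((applyW f)^[k] [(1 : Fin 2)]).getD n 1 := by
  unfold fixpt
  rcases le_total (n + 1) k with h | h
  · exact (getD_prefix (P_prefix hf1 h) (by have := length_P hne hf1 hu (n+1); omega) 1).symm
  · exact getD_prefix (P_prefix hf1 h) hk 1

end

/-- `spir` is not pure morphic: there is no morphism `f` on `{0,1}` with
`f(1) = 1·u`, `u` nonempty, such that `spir = f^∞(1)`. -/
theorem stmt_17 (spir : ℕ → Fin 2)
    (hspir : ∀ n : ℕ, spir n = 1 ↔ ∃ k : ℕ, n = k * (k + 1) / 2) :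
    ¬ ∃ (f : Fin 2 → List (Fin 2)) (u : List (Fin 2)),
        (∀ b, f b ≠ []) ∧ u ≠ [] ∧ f 1 = 1 :: u ∧ spir = fixpt f 1 := by
  rintro ⟨f, u, hne, hu, hf1, hfix⟩
  have hp2 : 2 ≤ (f 1).length := by
    rw [hf1]
    cases u with
    | nil => exact absurd rfl hu
    | cons a l => simp
  have hP1 : (applyW f)^[1] [(1 : Fin 2)] = f 1 := by
    simp [applyW]
  -- u starts with 1, since spir 1 = 1
  have hsp1 : spir 1 = 1 := (hspir 1).mpr ⟨1, by norm_num⟩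
  have hg1 : spir 1 = (f 1).getD 1 1 := by
    rw [hfix, fixpt_getD hne hf1 hu (by rw [hP1]; omega), hP1]
  obtain ⟨u0, u', rfl⟩ : ∃ u0 u', u = u0 :: u' := by
    cases u with
    | nil => exact absurd rfl hu
    | cons a l => exact ⟨a, l, rfl⟩
  have hu0 : u0 = 1 := by
    rw [hsp1, hf1] at hg1
    simpa using hg1.symm
  subst hu0
  -- f 1 ++ f 1 is a prefix of P 2
  have hP2 : (applyW f)^[2] [(1 : Fin 2)] = (f 1 ++ f 1) ++ applyW f u' := by
    have h2 : (applyW f)^[2] [(1 : Fin 2)] = applyW f ((applyW f)^[1] [1]) :=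
      Function.iterate_succ_apply' _ _ _
    rw [h2, hP1]
    simp only [hf1, applyW_cons, List.append_assoc]
  have hpre : (f 1 ++ f 1) <+: (applyW f)^[2] [(1 : Fin 2)] := by
    rw [hP2]; exact List.prefix_append _ _
  set p := (f 1).length with hp
  have hff : ∀ i, i < 2 * p → spir i = (f 1 ++ f 1).getD i 1 := by
    intro i hi
    have hlen : i < (f 1 ++ f 1).length := by simp [hp]; omega
    have hlen2 : i < ((applyW f)^[2] [(1 : Fin 2)]).length := by
      calc i < (f 1 ++ f 1).length := hlen
      _ ≤ _ := hpre.length_le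
    rw [hfix, fixpt_getD hne hf1 hu hlen2, getD_prefix hpre hlen 1]
  have hsp : spir p = 1 := by
    rw [hff p (by omega), List.getD_append_right _ _ _ _ (le_refl p),
      Nat.sub_self, hf1]
    rfl
  have hsp' : spir (p + 1) = 1 := by
    rw [hff (p + 1) (by omega), List.getD_append_right _ _ _ _ (by omega),
      Nat.add_sub_cancel_left, hf1]
    rfl
  obtain ⟨m, hm⟩ := (hspir p).mp hsp
  obtain ⟨m', hm'⟩ := (hspir (p + 1)).mp hsp'
  have e1 : 2 * p = m * (m + 1) := by
    have h2 : 2 ∣ m * (m + 1) := (Nat.even_mul_succ_self m).two_dvd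
    omega
  have e2 : 2 * (p + 1) = m' * (m' + 1) := by
    have h2 : 2 ∣ m' * (m' + 1) := (Nat.even_mul_succ_self m').two_dvd
    omega
  have hm2 : 2 ≤ m := by
    by_contra hc
    push_neg at hc
    interval_cases m <;> omega
  rcases le_or_gt m' m with h | h
  · have : m' * (m' + 1) ≤ m * (m + 1) := Nat.mul_le_mul h (by omega)
    omega
  · have hle : (m + 1) * (m + 2) ≤ m' * (m' + 1) := Nat.mul_le_mul h (by omega)
    have hexp : (m + 1) * (m + 2) = m * (m + 1) + 2 * (m + 1) := by ring
    omega
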